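/- Let A be an m×n real matrix (m ≥ n) partitioned into row blocks A₁,...,A_p. Let each block have a QR factorization A_i = Q_i R_i with Q_iᵀQ_i = I_n, and let the stacked matrix [R₁; R₂; ...; R_p] have QR factorization with orthonormal-column factor [Q_{1,1}; ...; Q_{p,1}] and upper triangular factor R. Then the block matrix Q with i-th row block Q_i Q_{i,1} satisfies QᵀQ = I_n and A = QR; i.e., the communication-avoiding (TSQR) procedure yields a valid QR factorization of A. -/

import Mathlib

open Matrix Finset

/-- Correctness of the communication-avoiding (TSQR) factorization: if each row
block A_i = Q_i R_i with Q_iᵀQ_i = I, and the stacked R_i factor as R_i = Q_{i,1} R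
with Σ_i Q_{i,1}ᵀ Q_{i,1} = I and R upper triangular, then the matrix Q whose i-th
row block is Q_i Q_{i,1} has orthonormal columns and A = Q R. -/
theorem stmt_11 (p n : ℕ) (m : Fin p → ℕ) (hm : ∀ i, n ≤ m i)
    (A : Matrix ((i : Fin p) × Fin (m i)) (Fin n) ℝ)
    (Qi : (i : Fin p) → Matrix (Fin (m i)) (Fin n) ℝ)
    (Ri : Fin p → Matrix (Fin n) (Fin n) ℝ)
    (hQi : ∀ i, (Qi i)ᵀ * Qi i = 1)
    (hRiTri : ∀ i, (Ri i).BlockTriangular (id : Fin n → Fin n))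
    (hblocks : ∀ (i : Fin p) (r : Fin (m i)) (c : Fin n), A ⟨i, r⟩ c = (Qi i * Ri i) r c)
    (Q1 : Fin p → Matrix (Fin n) (Fin n) ℝ)
    (R : Matrix (Fin n) (Fin n) ℝ)
    (hRTri : R.BlockTriangular (id : Fin n → Fin n))
    (hstack : ∀ i, Ri i = Q1 i * R)
    (horth : ∑ i, (Q1 i)ᵀ * Q1 i = 1)
    (Q : Matrix ((i : Fin p) × Fin (m i)) (Fin n) ℝ)
    (hQ : ∀ (i : Fin p) (r : Fin (m i)) (c : Fin n), Q ⟨i, r⟩ c = (Qi i * Q1 i) r c) :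
    Qᵀ * Q = 1 ∧ A = Q * R := by
  constructor
  · ext a b
    have : (Qᵀ * Q) a b = ∑ i : Fin p, ((Q1 i)ᵀ * ((Qi i)ᵀ * Qi i) * Q1 i) a b := by
      simp only [Matrix.mul_apply, Matrix.transpose_apply]
      rw [← Finset.univ_sigma_univ, Finset.sum_sigma]
      refine Finset.sum_congr rfl fun i _ => ?_
      simp only [Matrix.mul_apply, Matrix.transpose_apply, hQ]
      simp only [Matrix.mul_apply, Finset.sum_mul, Finset.mul_sum]
      rw [Finset.sum_comm]
      refine Finset.sum_congr rfl fun x _ => ?_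
      rw [Finset.sum_comm]
      refine Finset.sum_congr rfl fun y _ => ?_
      refine Finset.sum_congr rfl fun r _ => ?_
      ring
    rw [this]
    have : ∑ i : Fin p, ((Q1 i)ᵀ * ((Qi i)ᵀ * Qi i) * Q1 i) a b
        = (∑ i : Fin p, (Q1 i)ᵀ * Q1 i) a b := by
      rw [Matrix.sum_apply]
      refine Finset.sum_congr rfl fun i _ => ?_
      rw [hQi, Matrix.mul_one]
    rw [this, horth]
  · ext ⟨i, r⟩ c
    rw [hblocks i r c, hstack i, ← Matrix.mul_assoc]
    simp only [Matrix.mul_apply, hQ]
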